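/- arXiv:1303.2023 — 4 statements merged into one kernel-verified Lean document; each statement's English description precedes it below -/
import Mathlib

section
/- The coefficients C^n_k satisfy the recursion C^{n+1}_k = ∑_{i=1}^j (N(k − e_i, k_i − 1) / N(k, k_i)) · C^n_{k − e_i}, where the sum is over the j coordinates of k, e_i is the i-th standard basis vector, tuples with a zero coordinate are identified with the corresponding shorter tuple, and C^n_{k'} is the coefficient for the tuple k' of weight n (with C^1_{(1)} = 1). -/
/-- The Faà di Bruno coefficient `C^n_k = (n!/∏ k_p!) / ∏_i N(k,i)!` for a
multiset (tuple up to order) `k`, where `N(k,i)` is the multiplicity of `i` in `k`. -/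
noncomputable def faaC (n : ℕ) (k : Multiset ℕ) : ℚ :=
  (n.factorial : ℚ) /
    (((k.map Nat.factorial).prod : ℚ) * (k.toFinset.prod fun i => ((k.count i).factorial : ℚ)))

lemma Q_cons (a : ℕ) (m : Multiset ℕ) :
    ((a ::ₘ m).toFinset.prod fun i => (((a ::ₘ m).count i).factorial : ℚ)) =
      (m.count a + 1) * (m.toFinset.prod fun i => ((m.count i).factorial : ℚ)) := by
  by_cases h : a ∈ m.toFinset
  · rw [Multiset.toFinset_cons, Finset.insert_eq_self.2 h,
      ← Finset.mul_prod_erase _ _ h, ← Finset.mul_prod_erase _ (fun i => ((m.count i).factorial : ℚ)) h]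
    have h1 : ∀ i ∈ m.toFinset.erase a, (((a ::ₘ m).count i).factorial : ℚ)
        = ((m.count i).factorial : ℚ) := by
      intro i hi
      rw [Multiset.count_cons_of_ne (Finset.ne_of_mem_erase hi)]
    rw [Finset.prod_congr rfl h1, Multiset.count_cons_self, Nat.factorial_succ]
    push_cast
    ring
  · have h0 : m.count a = 0 := by
      simpa [Multiset.count_eq_zero] using fun hm => h (Multiset.mem_toFinset.2 hm)
    rw [Multiset.toFinset_cons, Finset.prod_insert h, Multiset.count_cons_self, h0]
    have h1 : ∀ i ∈ m.toFinset, (((a ::ₘ m).count i).factorial : ℚ)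
        = ((m.count i).factorial : ℚ) := by
      intro i hi
      rw [Multiset.count_cons_of_ne (by rintro rfl; exact h hi)]
    rw [Finset.prod_congr rfl h1]
    norm_num

lemma faaC_cons (n a : ℕ) (m : Multiset ℕ) :
    faaC n (a ::ₘ m) = (n.factorial : ℚ) /
      (((a.factorial : ℚ) * ((m.map Nat.factorial).prod : ℚ)) *
        (((m.count a : ℚ) + 1) * (m.toFinset.prod fun i => ((m.count i).factorial : ℚ)))) := by
  rw [faaC, Multiset.map_cons, Multiset.prod_cons, Q_cons]
  congr 1
  push_cast
  ring

lemma faaC_helper (c d f P Q nf v : ℚ) (hf : f ≠ 0) (hP : P ≠ 0) (hQ : Q ≠ 0)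
    (hc : c + 1 ≠ 0) (hd : d + 1 ≠ 0) (hv : v ≠ 0) :
    (c + 1) * ((d + 1) / (c + 1)) * (nf / ((f * P) * ((d + 1) * Q))) =
      ((c + 1) * v) * (nf / (((v * f) * P) * ((c + 1) * Q))) := by
  field_simp


set_option maxHeartbeats 1000000 in
/-- The recursion for the coefficients: `C^1_{(1)} = 1` and
`C^{n+1}_k = ∑_i (N(k - eᵢ, kᵢ - 1)/N(k, kᵢ)) C^n_{k - eᵢ}`, where the sum over the
coordinates of `k` is grouped by the common value `v` of equal coordinates (there are
`N(k,v)` coordinates with value `v`, each contributing the same term), and `k - eᵢ`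
is the multiset `k.erase v + {v-1}` (a coordinate equal to `0` contributes factors
`0! = 1` and `N(·,0)! = 1` to `C^n`, so it may equivalently be deleted). -/
theorem faaC_recursion :
    faaC 1 {1} = 1 ∧
    ∀ (n : ℕ) (k : Multiset ℕ), (∀ i ∈ k, 0 < i) → k.sum = n + 1 →
      faaC (n + 1) k =
        ∑ v ∈ k.toFinset,
          (k.count v : ℚ) *
            ((((k.erase v + {v - 1}).count (v - 1) : ℚ)) / (k.count v : ℚ)) *
              faaC n (k.erase v + {v - 1}) := by
  constructor
  · simp [faaC]
  · intro n k hpos hsum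
    have key : ∀ v ∈ k.toFinset,
        (k.count v : ℚ) *
            ((((k.erase v + {v - 1}).count (v - 1) : ℚ)) / (k.count v : ℚ)) *
              faaC n (k.erase v + {v - 1})
          = ((k.count v : ℚ) * v) *
            ((n.factorial : ℚ) /
              (((k.map Nat.factorial).prod : ℚ) *
                (k.toFinset.prod fun i => ((k.count i).factorial : ℚ)))) := by
      intro v hv
      have hvk : v ∈ k := Multiset.mem_toFinset.1 hv
      have hvpos : 0 < v := hpos v hvk
      set e := k.erase v with he
      have hk : v ::ₘ e = k := Multiset.cons_erase hvk
      have hk' : k.erase v + {v - 1} = (v - 1) ::ₘ e := by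
        rw [add_comm, Multiset.singleton_add]
      have hv1 : v - 1 + 1 = v := Nat.succ_pred_eq_of_pos hvpos
      have hfact : (v.factorial : ℚ) = v * ((v - 1).factorial : ℚ) := by
        rw [← hv1, Nat.factorial_succ, Nat.add_sub_cancel]
        push_cast
        ring
      have hc : (k.count v : ℚ) = (e.count v : ℚ) + 1 := by
        rw [← hk, Multiset.count_cons_self]; push_cast; ring
      have hP : ((k.map Nat.factorial).prod : ℚ)
          = (v.factorial : ℚ) * ((e.map Nat.factorial).prod : ℚ) := by
        rw [← hk, Multiset.map_cons, Multiset.prod_cons]; push_cast; ring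
      have hQ : (k.toFinset.prod fun i => ((k.count i).factorial : ℚ))
          = ((e.count v : ℚ) + 1) * (e.toFinset.prod fun i => ((e.count i).factorial : ℚ)) := by
        rw [← hk, Q_cons]
      have hd : (((k.erase v + {v - 1}).count (v - 1)) : ℚ)
          = (e.count (v - 1) : ℚ) + 1 := by
        rw [hk', Multiset.count_cons_self]; push_cast; try ring
      have h1 : (0:ℚ) < ((e.map Nat.factorial).prod : ℚ) := by
        rw [Nat.cast_pos]
        exact Multiset.prod_pos (fun a ha => by
          obtain ⟨b, _, rfl⟩ := Multiset.mem_map.1 ha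
          exact Nat.factorial_pos b)
      have h2 : (0:ℚ) < e.toFinset.prod fun i => ((e.count i).factorial : ℚ) := by
        exact Finset.prod_pos fun i _ => by positivity
      have h3 : ((v - 1).factorial : ℚ) ≠ 0 := by positivity
      have h4 : (v:ℚ) ≠ 0 := by positivity
      have h5 : ((e.count v : ℚ) + 1) ≠ 0 := by positivity
      have h6 : ((e.count (v - 1) : ℚ) + 1) ≠ 0 := by positivity
      rw [hd, hc, hk', faaC_cons, hP, hQ, hfact]
      exact faaC_helper _ _ _ _ _ _ _ h3 h1.ne' h2.ne' h5 h6 h4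
    rw [Finset.sum_congr rfl key, ← Finset.sum_mul]
    have h2 : ∑ v ∈ k.toFinset, (k.count v : ℚ) * v = ((n : ℚ) + 1) := by
      have h3 : ∑ v ∈ k.toFinset, k.count v * v = n + 1 := by
        have := Finset.sum_multiset_count k
        simp only [smul_eq_mul] at this
        rw [← this, hsum]
      exact_mod_cast h3
    rw [h2, faaC, Nat.factorial_succ]
    push_cast
    ring
end

section
/- For every n ≥ 2, ∑_{j=1}^n (−1)^{j−1} (j−1)! · (∑_{k ∈ M^j, |k| = n} C^n_k) = 0, where the inner sum runs over all decreasing tuples k = (k₁ ≥ ⋯ ≥ k_j ≥ 1) of positive integers with k₁ + ⋯ + k_j = n. -/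
namespace AltFaa

open PowerSeries

/-- product of factorials of multiplicities -/
noncomputable def D (k : Multiset ℕ) : ℚ := k.toFinset.prod fun i => ((k.count i).factorial : ℚ)

lemma D_pos (k : Multiset ℕ) : 0 < D k :=
  Finset.prod_pos fun i _ => by positivity

noncomputable def P (k : Multiset ℕ) : ℚ := ((k.map Nat.factorial).prod : ℚ)

lemma P_pos (k : Multiset ℕ) : 0 < P k := by
  unfold P
  have : 0 < (k.map Nat.factorial).prod := Multiset.prod_pos (by simp; intro i _; exact i.factorial_pos)
  exact_mod_cast this

lemma faaC_eq (n : ℕ) (k : Multiset ℕ) : faaC n k = (n.factorial : ℚ) / (P k * D k) := rfl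

lemma P_cons (a : ℕ) (t : Multiset ℕ) : P (a ::ₘ t) = (a.factorial : ℚ) * P t := by
  unfold P; rw [Multiset.map_cons, Multiset.prod_cons]; push_cast; ring

lemma D_cons (a : ℕ) (t : Multiset ℕ) : D (a ::ₘ t) = ((t.count a : ℚ) + 1) * D t := by
  unfold D
  by_cases h : a ∈ t
  · rw [Multiset.toFinset_cons, Finset.insert_eq_self.mpr (Multiset.mem_toFinset.mpr h)]
    rw [← Finset.mul_prod_erase _ _ (Multiset.mem_toFinset.mpr h),
        ← Finset.mul_prod_erase _ _ (Multiset.mem_toFinset.mpr h)]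
    rw [Multiset.count_cons_self, Nat.factorial_succ]
    rw [Finset.prod_congr rfl (fun i hi => by
      rw [Multiset.count_cons_of_ne (Finset.ne_of_mem_erase hi)])]
    push_cast; ring
  · rw [Multiset.toFinset_cons, Finset.prod_insert (by simpa using h)]
    rw [Multiset.count_cons_self, Multiset.count_eq_zero_of_notMem h]
    rw [Finset.prod_congr rfl (fun i hi => by
      rw [Multiset.count_cons_of_ne (by rintro rfl; exact h (Multiset.mem_toFinset.mp hi))])]
    simp


lemma key_term (b : ℕ) (t : Multiset ℕ) :
    (((t.sum + b).choose b : ℕ) : ℚ) * faaC t.sum t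
      = (b + 1) * ((t.count (b+1) : ℚ) + 1) / (t.sum + b + 1)
          * faaC (t.sum + b + 1) ((b+1) ::ₘ t) := by
  set N := t.sum with hN
  rw [faaC_eq, faaC_eq, P_cons, D_cons]
  rw [Nat.cast_choose ℚ (Nat.le_add_left b N)]
  have h2 : (N + b + 1).factorial = (N + b + 1) * (N + b).factorial := Nat.factorial_succ _
  have h3 : (b + 1).factorial = (b + 1) * b.factorial := Nat.factorial_succ _
  have e1 : ((N + b - b) ) = N := by omega
  rw [e1, h2, h3]
  have hPD := (P_pos t).ne'
  have hD := (D_pos t).ne'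
  have hb : (b.factorial : ℚ) ≠ 0 := by positivity
  have hNf : (N.factorial : ℚ) ≠ 0 := by positivity
  have hNb : ((N:ℚ) + b + 1) ≠ 0 := by positivity
  have hNbf : (((N + b).factorial : ℕ) : ℚ) ≠ 0 := by positivity
  push_cast
  field_simp

lemma key_term' (n a : ℕ) (ha : 1 ≤ a) (ha2 : a ≤ n + 1) (t : Multiset ℕ)
    (ht : t.sum = n + 1 - a) :
    ((n.choose (a-1) : ℕ) : ℚ) * faaC (n + 1 - a) t
      = (a : ℚ) * (((a ::ₘ t).count a : ℕ) : ℚ) / ((n : ℚ) + 1)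
          * faaC (n + 1) (a ::ₘ t) := by
  obtain ⟨b, rfl⟩ : ∃ b, a = b + 1 := ⟨a - 1, by omega⟩
  obtain ⟨N, rfl⟩ : ∃ N, n = N + b := ⟨t.sum, by omega⟩
  have hts : t.sum = N := by omega
  rw [show N + b + 1 - (b + 1) = N from by omega, Multiset.count_cons_self,
    show (N + b).choose (b + 1 - 1) = (N + b).choose b from by norm_num]
  rw [← hts]
  have key := key_term b t
  push_cast at key ⊢
  rw [key]

/-- add a part `a` to a partition of `n - a` -/
def consPart {n a : ℕ} (ha : 1 ≤ a) (ha2 : a ≤ n) (p : (n - a).Partition) : n.Partition where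
  parts := a ::ₘ p.parts
  parts_pos := by
    intro i hi
    rcases Multiset.mem_cons.mp hi with rfl | h
    · omega
    · exact p.parts_pos h
  parts_sum := by rw [Multiset.sum_cons, p.parts_sum]; omega

/-- remove a part `a` from a partition of `n` -/
def erasePart {n : ℕ} (q : n.Partition) (a : ℕ) (ha : a ∈ q.parts) : (n - a).Partition where
  parts := q.parts.erase a
  parts_pos := fun h => q.parts_pos (Multiset.mem_of_mem_erase h)
  parts_sum := by
    have h2 : a + (q.parts.erase a).sum = n := by
      rw [← Multiset.sum_cons, Multiset.cons_erase ha, q.parts_sum]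
    omega

/-- the sum of `faaC` over all partitions of `n` with `j` parts -/
noncomputable def B (n j : ℕ) : ℚ :=
  ∑ p ∈ Finset.univ.filter fun p : n.Partition => p.parts.card = j, faaC n p.parts

lemma per_q (n : ℕ) (q : (n+1).Partition) :
    faaC (n+1) q.parts
      = ∑ a ∈ q.parts.toFinset,
          (a : ℚ) * ((q.parts.count a : ℕ) : ℚ) / ((n : ℚ) + 1) * faaC (n+1) q.parts := by
  rw [← Finset.sum_mul, ← Finset.sum_div]
  have h : ∑ m ∈ q.parts.toFinset, q.parts.count m * m = n + 1 := by
    have := Finset.sum_multiset_count q.parts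
    simp only [smul_eq_mul] at this
    rw [← this, q.parts_sum]
  have h2 : ∑ a ∈ q.parts.toFinset, (a : ℚ) * ((q.parts.count a : ℕ) : ℚ)
      = ((n : ℚ) + 1) := by
    calc ∑ a ∈ q.parts.toFinset, (a : ℚ) * ((q.parts.count a : ℕ) : ℚ)
        = ((∑ m ∈ q.parts.toFinset, q.parts.count m * m : ℕ) : ℚ) := by
          push_cast
          exact Finset.sum_congr rfl fun a _ => by ring
      _ = ((n : ℚ) + 1) := by rw [h]; push_cast; ring
  rw [h2, div_self (by positivity), one_mul]

lemma B_rec (n j : ℕ) :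
    B (n+1) (j+1) = ∑ a ∈ Finset.Icc 1 (n+1), ((n.choose (a-1) : ℕ) : ℚ) * B (n+1-a) j := by
  unfold B
  simp only [Finset.mul_sum]
  rw [Finset.sum_sigma' (Finset.Icc 1 (n+1))
    (fun a => Finset.univ.filter fun p : (n+1-a).Partition => p.parts.card = j)
    (fun a p => ((n.choose (a-1) : ℕ) : ℚ) * faaC (n+1-a) p.parts)]
  rw [Finset.sum_congr rfl fun q _ => per_q n q]
  rw [Finset.sum_sigma' (Finset.univ.filter fun q : (n+1).Partition => q.parts.card = j+1)
    (fun q => q.parts.toFinset)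
    (fun q a => (a : ℚ) * ((q.parts.count a : ℕ) : ℚ) / ((n : ℚ) + 1) * faaC (n+1) q.parts)]
  refine Finset.sum_bij' ?_ ?_ ?_ ?_ ?_ ?_ ?_
  · -- i : forward map (q, a) ↦ (a, erase)
    exact fun x hx =>
      ⟨x.2, erasePart x.1 x.2 (Multiset.mem_toFinset.mp (Finset.mem_sigma.mp hx).2)⟩
  · -- j : backward map (a, p) ↦ (cons, a)
    exact fun x hx =>
      ⟨consPart (Finset.mem_Icc.mp (Finset.mem_sigma.mp hx).1).1
        (Finset.mem_Icc.mp (Finset.mem_sigma.mp hx).1).2 x.2, x.1⟩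
  · -- hi
    intro x hx
    obtain ⟨hx1, hx2⟩ := Finset.mem_sigma.mp hx
    have hmem := Multiset.mem_toFinset.mp hx2
    refine Finset.mem_sigma.mpr ⟨Finset.mem_Icc.mpr ⟨x.1.parts_pos hmem, ?_⟩,
      Finset.mem_filter.mpr ⟨Finset.mem_univ _, ?_⟩⟩
    · show x.2 ≤ n + 1
      have : x.2 + (x.1.parts.erase x.2).sum = n + 1 := by
        rw [← Multiset.sum_cons, Multiset.cons_erase hmem, x.1.parts_sum]
      omega
    · show (x.1.parts.erase x.2).card = j
      rw [Multiset.card_erase_of_mem hmem, (Finset.mem_filter.mp hx1).2]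
      rfl
  · -- hj
    intro x hx
    obtain ⟨hx1, hx2⟩ := Finset.mem_sigma.mp hx
    refine Finset.mem_sigma.mpr ⟨Finset.mem_filter.mpr ⟨Finset.mem_univ _, ?_⟩, ?_⟩
    · show (x.1 ::ₘ x.2.parts).card = j + 1
      rw [Multiset.card_cons, (Finset.mem_filter.mp hx2).2]
    · exact Multiset.mem_toFinset.mpr (Multiset.mem_cons_self _ _)
  · -- left inverse
    intro x hx
    obtain ⟨hx1, hx2⟩ := Finset.mem_sigma.mp hx
    have hmem := Multiset.mem_toFinset.mp hx2
    refine Sigma.ext ?_ ?_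
    · exact Nat.Partition.ext (Multiset.cons_erase hmem)
    · simp
  · -- right inverse
    intro x hx
    refine Sigma.ext rfl (heq_of_eq ?_)
    exact Nat.Partition.ext (Multiset.erase_cons_head _ _)
  · -- terms agree
    intro x hx
    obtain ⟨hx1, hx2⟩ := Finset.mem_sigma.mp hx
    have hmem := Multiset.mem_toFinset.mp hx2
    have hpos : 1 ≤ x.2 := x.1.parts_pos hmem
    have hsum : x.2 + (x.1.parts.erase x.2).sum = n + 1 := by
      rw [← Multiset.sum_cons, Multiset.cons_erase hmem, x.1.parts_sum]
    have key := key_term' n x.2 hpos (by omega) (x.1.parts.erase x.2) (by omega)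
    rw [Multiset.cons_erase hmem] at key
    exact key.symm

noncomputable def Y : PowerSeries ℚ := exp ℚ - 1

lemma one_add_Y : (1 : PowerSeries ℚ) + Y = exp ℚ := by unfold Y; ring

lemma constantCoeff_Y : constantCoeff (R := ℚ) Y = 0 := by
  unfold Y
  rw [map_sub, constantCoeff_exp, map_one, sub_self]

lemma derivative_exp' : d⁄dX ℚ (exp ℚ) = exp ℚ := by
  ext n
  rw [coeff_derivative, coeff_exp, coeff_exp]
  have h1 : ((n+1).factorial : ℚ) = (n+1) * n.factorial := by
    rw [Nat.factorial_succ]; push_cast; ring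
  have h2 : (n.factorial : ℚ) ≠ 0 := by positivity
  simp only [Algebra.algebraMap_self, RingHom.id_apply]
  rw [h1]
  field_simp

lemma derivative_Y : d⁄dX ℚ Y = 1 + Y := by
  unfold Y
  rw [map_sub, derivative_exp']
  have : d⁄dX ℚ (1 : PowerSeries ℚ) = 0 := by
    rw [← map_one (C (R := ℚ)), derivative_C]
  rw [this, sub_zero]
  ring

lemma coeff_Y_pow_zero {m j : ℕ} (h : m < j) : coeff (R := ℚ) m (Y ^ j) = 0 := by
  induction j generalizing m with
  | zero => omega
  | succ j ih =>
    rw [pow_succ, coeff_mul]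
    apply Finset.sum_eq_zero
    intro p hp
    replace hp := Finset.HasAntidiagonal.mem_antidiagonal.mp hp
    by_cases h2 : p.2 = 0
    · have : coeff (R := ℚ) p.2 Y = 0 := by
        rw [h2, coeff_zero_eq_constantCoeff, constantCoeff_Y]
      rw [this, mul_zero]
    · rw [ih (by omega), zero_mul]

lemma derivative_Y_pow (j : ℕ) :
    d⁄dX ℚ (Y ^ (j+1)) = (j+1) • (Y ^ j * (1 + Y)) := by
  rw [Derivation.leibniz_pow, derivative_Y]
  simp [smul_eq_mul, Nat.succ_sub_one]

/-- partitions of n with zero parts only exist for n = 0 -/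
lemma parts_eq_zero {n : ℕ} (p : n.Partition) (h : p.parts.card = 0) : n = 0 := by
  rw [Multiset.card_eq_zero] at h
  rw [← p.parts_sum, h, Multiset.sum_zero]

lemma B_zero_zero : B 0 0 = 1 := by
  unfold B
  have hall : ∀ p : Nat.Partition 0, p.parts = 0 := by
    intro p
    rw [Multiset.eq_zero_iff_forall_notMem]
    intro a ha
    have h1 := p.parts_pos ha
    have h2 : a ≤ Multiset.sum p.parts := Multiset.le_sum_of_mem ha
    rw [p.parts_sum] at h2
    omega
  have huniv : (Finset.univ.filter fun p : Nat.Partition 0 => p.parts.card = 0)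
      = {⟨0, by simp, by simp⟩} := by
    apply Finset.eq_singleton_iff_unique_mem.mpr
    constructor
    · exact Finset.mem_filter.mpr ⟨Finset.mem_univ _, rfl⟩
    · intro p _
      exact Nat.Partition.ext (hall p)
  rw [huniv, Finset.sum_singleton]
  show faaC 0 0 = 1
  unfold faaC
  simp

lemma B_eq (j n : ℕ) :
    B n j = (n.factorial : ℚ) / (j.factorial : ℚ) * coeff (R := ℚ) n (Y ^ j) := by
  induction j generalizing n with
  | zero =>
    cases n with
    | zero => simpa using B_zero_zero
    | succ m =>
      have hempty : (Finset.univ.filter fun p : (m+1).Partition => p.parts.card = 0)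
          = ∅ := by
        apply Finset.filter_false_of_mem
        intro p _
        intro h
        exact absurd (parts_eq_zero p h) (by omega)
      unfold B
      rw [hempty, Finset.sum_empty, pow_zero]
      rw [coeff_one]
      simp
  | succ j ih =>
    cases n with
    | zero =>
      have hempty : (Finset.univ.filter fun p : Nat.Partition 0 => p.parts.card = j+1)
          = ∅ := by
        apply Finset.filter_false_of_mem
        intro p _
        intro h
        have : p.parts = 0 := by
          rw [Multiset.eq_zero_iff_forall_notMem]
          intro a ha
          have h1 := p.parts_pos ha
          have h2 : a ≤ Multiset.sum p.parts := Multiset.le_sum_of_mem ha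
          rw [p.parts_sum] at h2
          omega
        rw [this] at h
        simp at h
      unfold B
      rw [hempty, Finset.sum_empty, coeff_Y_pow_zero (by omega)]
      ring
    | succ m =>
      rw [B_rec m j]
      rw [Finset.sum_congr rfl fun a _ => by rw [ih (m+1-a)]]
      -- derivative relation
      have h2 := coeff_derivative (Y ^ (j+1)) m
      rw [derivative_Y_pow j, one_add_Y] at h2
      rw [map_nsmul] at h2
      rw [nsmul_eq_mul, coeff_mul] at h2
      push_cast at h2
      rw [Finset.Nat.sum_antidiagonal_eq_sum_range_succ_mk] at h2
      simp only [coeff_exp, Algebra.algebraMap_self, RingHom.id_apply] at h2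
      -- h2 : (j+1) * ∑ k ∈ range (m+1), coeff k (Y^j) * (1/(m-k)!) = coeff (m+1) (Y^(j+1)) * (m+1)
      have hm1 : ((m:ℚ)+1) ≠ 0 := by positivity
      have hc : coeff (R := ℚ) (m+1) (Y^(j+1))
          = ((j:ℚ)+1) * (∑ k ∈ Finset.range (m+1),
              coeff (R := ℚ) k (Y^j) * ((1:ℚ) / ((m-k).factorial : ℚ))) / ((m:ℚ)+1) := by
        rw [eq_div_iff hm1, ← h2]
      rw [hc]
      have e : (((m+1).factorial : ℚ))/(((j+1).factorial : ℚ)) * (((j:ℚ)+1) / ((m:ℚ)+1))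
          = ((m.factorial : ℚ))/((j.factorial : ℚ)) := by
        rw [Nat.factorial_succ, Nat.factorial_succ]
        push_cast
        have hj : ((j:ℚ)+1) ≠ 0 := by positivity
        have hjf : ((j.factorial : ℕ) : ℚ) ≠ 0 := by positivity
        field_simp
      rw [show ((((m+1).factorial : ℕ)): ℚ)/(((j+1).factorial : ℕ) : ℚ)
            * (((j:ℚ)+1) * (∑ k ∈ Finset.range (m+1),
                coeff (R := ℚ) k (Y^j) * ((1:ℚ) / ((m-k).factorial : ℚ))) / ((m:ℚ)+1))
          = ((((m+1).factorial : ℕ)): ℚ)/(((j+1).factorial : ℕ) : ℚ) * (((j:ℚ)+1) / ((m:ℚ)+1))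
            * (∑ k ∈ Finset.range (m+1),
                coeff (R := ℚ) k (Y^j) * ((1:ℚ) / ((m-k).factorial : ℚ))) from by ring]
      rw [e, Finset.mul_sum]
      refine Finset.sum_nbij' (fun a => m+1-a) (fun k => m+1-k) ?_ ?_ ?_ ?_ ?_
      · intro a ha
        rw [Finset.mem_Icc] at ha
        rw [Finset.mem_range]
        omega
      · intro k hk
        rw [Finset.mem_range] at hk
        rw [Finset.mem_Icc]
        omega
      · intro a ha
        rw [Finset.mem_Icc] at ha
        omega
      · intro k hk
        rw [Finset.mem_range] at hk
        omega
      · intro a ha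
        rw [Finset.mem_Icc] at ha
        obtain ⟨ha1, ha2⟩ := ha
        rw [show m - (m+1-a) = a - 1 from by omega]
        rw [Nat.cast_choose ℚ (show a - 1 ≤ m from by omega)]
        rw [show m - (a-1) = m+1-a from by omega]
        have f1 : (((a-1).factorial : ℕ) : ℚ) ≠ 0 := by positivity
        have f2 : (((m+1-a).factorial : ℕ) : ℚ) ≠ 0 := by positivity
        have f3 : ((j.factorial : ℕ) : ℚ) ≠ 0 := by positivity
        field_simp

/-- the truncated log series -/
noncomputable def F (n : ℕ) : PowerSeries ℚ :=
  ∑ i ∈ Finset.range n, C (R := ℚ) ((-1)^i / (i+1)) * Y ^ (i+1)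

lemma hterm (i : ℕ) : d⁄dX ℚ (C (R := ℚ) ((-1)^i / (i+1)) * Y ^ (i+1))
    = (-1 : PowerSeries ℚ)^i * (Y ^ i * (1 + Y)) := by
  rw [Derivation.leibniz, derivative_C, smul_zero, add_zero, derivative_Y_pow i,
    smul_eq_mul, nsmul_eq_mul, ← mul_assoc,
    show ((i+1 : ℕ) : PowerSeries ℚ) = C (R := ℚ) ((i : ℚ)+1) by
      rw [← map_natCast (C (R := ℚ)) (i+1)]; congr 1; push_cast; ring,
    ← map_mul]
  have : ((-1 : ℚ))^i / ((i : ℚ)+1) * ((i : ℚ)+1) = (-1)^i := by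
    have : ((i : ℚ)+1) ≠ 0 := by positivity
    field_simp
  rw [this, map_pow, map_neg, map_one]

lemma tele (n : ℕ) :
    ∑ i ∈ Finset.range n, (-1 : PowerSeries ℚ)^i * (Y^i * (1+Y))
      = 1 + (-1 : PowerSeries ℚ)^(n+1) * Y^n := by
  induction n with
  | zero => simp
  | succ N ihN =>
    rw [Finset.sum_range_succ, ihN]
    ring

lemma derivative_F (n : ℕ) :
    d⁄dX ℚ (F n) = 1 + (-1 : PowerSeries ℚ)^(n+1) * Y ^ n := by
  unfold F
  rw [map_sum, Finset.sum_congr rfl fun i _ => hterm i, tele]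

lemma coeff_F_zero (n : ℕ) (hn : 2 ≤ n) : coeff (R := ℚ) n (F n) = 0 := by
  obtain ⟨m, rfl⟩ : ∃ m, n = m + 2 := ⟨n - 2, by omega⟩
  have h := coeff_derivative (F (m+2)) (m+1)
  rw [derivative_F] at h
  rw [map_add, coeff_one, if_neg (by omega),
    show ((-1 : PowerSeries ℚ))^(m+2+1) * Y^(m+2) = C (R := ℚ) ((-1)^(m+2+1)) * Y^(m+2) by
      rw [map_pow, map_neg, map_one],
    coeff_C_mul, coeff_Y_pow_zero (by omega), mul_zero, add_zero] at h
  have hm2 : (((m+1 : ℕ):ℚ) + 1) ≠ 0 := by positivity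
  exact (mul_eq_zero.mp h.symm).resolve_right hm2

end AltFaa

open AltFaa PowerSeries in
theorem alternating_sum_faaC (n : ℕ) (hn : 2 ≤ n) :
    ∑ j ∈ Finset.Icc 1 n, (-1 : ℚ) ^ (j - 1) * ((j - 1).factorial : ℚ) *
      ∑ p ∈ Finset.univ.filter fun p : n.Partition => p.parts.card = j, faaC n p.parts = 0 := by
  have hB : ∀ j, (∑ p ∈ Finset.univ.filter fun p : n.Partition => p.parts.card = j,
      faaC n p.parts) = B n j := fun j => rfl
  calc ∑ j ∈ Finset.Icc 1 n, (-1 : ℚ) ^ (j - 1) * ((j - 1).factorial : ℚ) *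
        ∑ p ∈ Finset.univ.filter fun p : n.Partition => p.parts.card = j, faaC n p.parts
      = ∑ i ∈ Finset.range n,
          (n.factorial : ℚ) * (((-1 : ℚ))^i / ((i : ℚ)+1) * coeff (R := ℚ) n (Y^(i+1))) := by
        refine Finset.sum_nbij' (fun j => j - 1) (fun i => i + 1) ?_ ?_ ?_ ?_ ?_
        · intro j hj
          rw [Finset.mem_Icc] at hj
          rw [Finset.mem_range]
          omega
        · intro i hi
          rw [Finset.mem_range] at hi
          rw [Finset.mem_Icc]
          omega
        · intro j hj
          rw [Finset.mem_Icc] at hj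
          omega
        · intro i _
          omega
        · intro j hj
          rw [Finset.mem_Icc] at hj
          obtain ⟨hj1, hj2⟩ := hj
          rw [hB j, B_eq j n]
          rw [show j - 1 + 1 = j from by omega]
          have e1 : (j.factorial : ℚ) = ((j - 1 : ℕ) : ℚ) * ((j-1).factorial : ℚ)
              + ((j-1).factorial : ℚ) := by
            rw [show j = (j - 1) + 1 from by omega, Nat.factorial_succ]
            push_cast
            ring
          have f1 : ((j.factorial : ℕ) : ℚ) ≠ 0 := by positivity
          have f2 : (((j-1).factorial : ℕ) : ℚ) ≠ 0 := by positivity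
          have f3 : ((j - 1 : ℕ) : ℚ) + 1 ≠ 0 := by positivity
          have e2 : ((j : ℕ) : ℚ) = ((j - 1 : ℕ) : ℚ) + 1 := by
            rw [Nat.cast_sub hj1]; ring
          field_simp
          rw [e1]
          ring
    _ = (n.factorial : ℚ) * coeff (R := ℚ) n (F n) := by
        rw [show coeff (R := ℚ) n (F n) = ∑ i ∈ Finset.range n,
            ((-1 : ℚ))^i / ((i : ℚ)+1) * coeff (R := ℚ) n (Y ^ (i+1)) from by
          unfold F
          rw [map_sum]
          refine Finset.sum_congr rfl fun i _ => ?_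
          rw [coeff_C_mul]]
        rw [Finset.mul_sum]
    _ = 0 := by rw [coeff_F_zero n hn, mul_zero]
end

section
/- The n-th derivative of x ↦ e^{e^x} evaluated at x = 0 equals e · L_n, where L_n = ∑_{k : |k| = n} C^n_k is the sum over all partitions k of n of the coefficients C^n_k. (Equivalently, L_n is the n-th Bell number.) -/
open Finset

/-- The Bell numbers, defined by the strong recurrence
`bell (n+1) = ∑_{i ≤ n} (n.choose i) * bell i`. -/
noncomputable def bell : ℕ → ℚ
  | 0 => 1
  | n + 1 => ∑ i ∈ (Finset.range (n+1)).attach, (n.choose i.1 : ℚ) * bell i.1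
  decreasing_by exact Nat.lt_succ_of_le (Finset.mem_range_succ_iff.mp i.2)

lemma bell_succ (n : ℕ) :
    bell (n+1) = ∑ i ∈ Finset.range (n+1), (n.choose i : ℚ) * bell i := by
  rw [bell, ← Finset.sum_attach (Finset.range (n+1)) (fun i => (n.choose i : ℚ) * bell i)]

lemma countprod_erase {q : Multiset ℕ} {s : ℕ} (hs : s ∈ q) :
    (q.toFinset.prod fun i => ((q.count i).factorial : ℚ)) =
      (q.count s : ℚ) *
        ((q.erase s).toFinset.prod fun i => (((q.erase s).count i).factorial : ℚ)) := by
  have hsub : (q.erase s).toFinset ⊆ q.toFinset :=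
    Multiset.toFinset_subset.mpr (Multiset.subset_of_le (Multiset.erase_le s q))
  have h1 : ((q.erase s).toFinset.prod fun i => (((q.erase s).count i).factorial : ℚ)) =
      (q.toFinset.prod fun i => (((q.erase s).count i).factorial : ℚ)) := by
    refine Finset.prod_subset hsub fun i _ hi => ?_
    have h0 : (q.erase s).count i = 0 := by
      by_contra h
      exact hi (Multiset.mem_toFinset.mpr (Multiset.count_pos.mp (Nat.pos_of_ne_zero h)))
    simp [h0]
  have hmem : s ∈ q.toFinset := Multiset.mem_toFinset.mpr hs
  rw [h1, ← Finset.mul_prod_erase _ _ hmem, ← Finset.mul_prod_erase _ _ hmem, ← mul_assoc]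
  have h2 : (Finset.erase q.toFinset s).prod (fun i => (((q.erase s).count i).factorial : ℚ)) =
      (Finset.erase q.toFinset s).prod (fun i => ((q.count i).factorial : ℚ)) := by
    refine Finset.prod_congr rfl fun i hi => ?_
    rw [Multiset.count_erase_of_ne (Finset.ne_of_mem_erase hi)]
  rw [h2]
  congr 1
  have hc : 0 < q.count s := Multiset.count_pos.mpr hs
  rw [Multiset.count_erase_self, ← Nat.mul_factorial_pred hc.ne']
  push_cast
  ring

lemma faaC_term (n : ℕ) (q : Multiset ℕ) (hpos : ∀ s ∈ q, 0 < s) (hsum : q.sum = n + 1)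
    {s : ℕ} (hs : s ∈ q) :
    (n.choose (s-1) : ℚ) * faaC (n+1-s) (q.erase s) =
      faaC (n+1) q * ((s : ℚ) * (q.count s : ℚ)) / ((n:ℚ)+1) := by
  have hq : s ::ₘ q.erase s = q := Multiset.cons_erase hs
  have hs1 : 1 ≤ s := hpos s hs
  have hsn : s ≤ n + 1 := by
    calc s ≤ q.sum := by rw [← hq, Multiset.sum_cons]; exact Nat.le_add_right _ _
    _ = n + 1 := hsum
  have hes : (q.erase s).sum = n + 1 - s := by
    have : s + (q.erase s).sum = n + 1 := by rw [← Multiset.sum_cons, hq, hsum]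
    omega
  have hchoose : (n.choose (s-1) : ℚ) =
      (n.factorial : ℚ) / ((s-1).factorial * (n+1-s).factorial) := by
    have he : n - (s - 1) = n + 1 - s := by omega
    rw [Nat.cast_choose ℚ (by omega : s - 1 ≤ n), he]
  have hN : (q.map Nat.factorial).prod = s.factorial * ((q.erase s).map Nat.factorial).prod := by
    conv_lhs => rw [← hq]
    rw [Multiset.map_cons, Multiset.prod_cons]
  have hmapprod : (((q.map Nat.factorial).prod : ℕ) : ℚ) =
      (s.factorial : ℚ) * ((((q.erase s).map Nat.factorial).prod : ℕ) : ℚ) := by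
    rw [hN]; push_cast; ring
  set a : ℚ := ((((q.erase s).map Nat.factorial).prod : ℕ) : ℚ) with ha
  set b : ℚ := ((q.erase s).toFinset.prod fun i => (((q.erase s).count i).factorial : ℚ)) with hb
  have hane : a ≠ 0 := by
    rw [ha]
    rw [Nat.cast_ne_zero]
    refine Multiset.prod_ne_zero ?_
    simp only [Multiset.mem_map]
    rintro ⟨x, -, hx⟩
    exact Nat.factorial_ne_zero x hx
  have hbne : b ≠ 0 := by
    rw [hb]
    refine Finset.prod_ne_zero_iff.mpr fun i _ => ?_
    exact_mod_cast Nat.factorial_ne_zero _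
  have hc : 0 < q.count s := Multiset.count_pos.mpr hs
  have hcne : ((q.count s : ℕ) : ℚ) ≠ 0 := by exact_mod_cast hc.ne'
  rw [faaC, faaC, hchoose, hmapprod, countprod_erase hs, ← ha, ← hb]
  have hfac1 : ((n+1).factorial : ℚ) = ((n:ℚ)+1) * n.factorial := by
    rw [Nat.factorial_succ]; push_cast; ring
  have hfac2 : (s.factorial : ℚ) = (s : ℚ) * (s-1).factorial := by
    exact_mod_cast (Nat.mul_factorial_pred (by omega : s ≠ 0)).symm
  rw [hfac1, hfac2]
  have h1 : ((s-1).factorial : ℚ) ≠ 0 := by exact_mod_cast Nat.factorial_ne_zero _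
  have h2 : ((n+1-s).factorial : ℚ) ≠ 0 := by exact_mod_cast Nat.factorial_ne_zero _
  have h3 : (s:ℚ) ≠ 0 := by exact_mod_cast (by omega : s ≠ 0)
  have h4 : ((n:ℚ)+1) ≠ 0 := by positivity
  field_simp

lemma faaC_rec (n : ℕ) (q : Multiset ℕ) (hpos : ∀ s ∈ q, 0 < s) (hsum : q.sum = n + 1) :
    faaC (n+1) q = ∑ s ∈ q.toFinset, (n.choose (s-1) : ℚ) * faaC (n+1-s) (q.erase s) := by
  have hcount : ∑ s ∈ q.toFinset, (s : ℚ) * (q.count s : ℚ) = (n : ℚ) + 1 := by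
    have hN : ∑ s ∈ q.toFinset, s * q.count s = q.sum := by
      have := Finset.sum_multiset_map_count q (id : ℕ → ℕ)
      simp only [smul_eq_mul, id_eq, Multiset.map_id'] at this
      rw [this]
      exact Finset.sum_congr rfl fun s _ => by ring
    have : ((∑ s ∈ q.toFinset, s * q.count s : ℕ) : ℚ) = ((n : ℕ) + 1 : ℕ) := by
      rw [hN, hsum]
    push_cast at this
    rw [← this]
  have : ∑ s ∈ q.toFinset, (n.choose (s-1) : ℚ) * faaC (n+1-s) (q.erase s) =
      ∑ s ∈ q.toFinset, faaC (n+1) q * ((s : ℚ) * (q.count s : ℚ)) / ((n:ℚ)+1) :=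
    Finset.sum_congr rfl fun s hs => faaC_term n q hpos hsum (Multiset.mem_toFinset.mp hs)
  rw [this, ← Finset.sum_div, ← Finset.mul_sum, hcount]
  field_simp

/-- The finset of partitions of `m`, as multisets. -/
def parts (m : ℕ) : Finset (Multiset ℕ) :=
  Finset.univ.image (fun p : m.Partition => p.parts)

lemma mem_parts {m : ℕ} {q : Multiset ℕ} :
    q ∈ parts m ↔ (∀ s ∈ q, 0 < s) ∧ q.sum = m := by
  constructor
  · rintro hq
    obtain ⟨p, -, rfl⟩ := Finset.mem_image.mp hq
    exact ⟨fun s hs => p.parts_pos hs, p.parts_sum⟩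
  · rintro ⟨h1, h2⟩
    exact Finset.mem_image.mpr ⟨⟨q, fun {s} hs => h1 s hs, h2⟩, Finset.mem_univ _, rfl⟩

lemma sum_parts {m : ℕ} (F : Multiset ℕ → ℚ) :
    ∑ p : m.Partition, F p.parts = ∑ q ∈ parts m, F q := by
  rw [parts, Finset.sum_image]
  intro p _ p' _ h
  exact Nat.Partition.ext h

lemma sum_faaC_rec (n : ℕ) :
    ∑ q ∈ parts (n+1), faaC (n+1) q =
      ∑ j ∈ Finset.range (n+1), (n.choose j : ℚ) * ∑ p ∈ parts j, faaC j p := by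
  have h1 : ∑ q ∈ parts (n+1), faaC (n+1) q =
      ∑ q ∈ parts (n+1), ∑ s ∈ q.toFinset,
        (n.choose (s-1) : ℚ) * faaC (n+1-s) (q.erase s) := by
    refine Finset.sum_congr rfl fun q hq => ?_
    obtain ⟨hpos, hsum⟩ := mem_parts.mp hq
    exact faaC_rec n q hpos hsum
  have h2 : ∑ j ∈ Finset.range (n+1), (n.choose j : ℚ) * ∑ p ∈ parts j, faaC j p =
      ∑ j ∈ Finset.range (n+1), ∑ p ∈ parts j,
        (n.choose (n-j) : ℚ) * faaC j p := by
    refine Finset.sum_congr rfl fun j hj => ?_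
    rw [Finset.mul_sum, Nat.choose_symm (Finset.mem_range_succ_iff.mp hj)]
  rw [h1, h2, Finset.sum_sigma', Finset.sum_sigma']
  refine Finset.sum_nbij' (i := fun x => (⟨n+1-x.2, x.1.erase x.2⟩ : Σ _ : ℕ, Multiset ℕ))
    (j := fun y => (⟨(n+1-y.1) ::ₘ y.2, n+1-y.1⟩ : Σ _ : Multiset ℕ, ℕ)) ?_ ?_ ?_ ?_ ?_
  · rintro ⟨q, s⟩ hx
    simp only [Finset.mem_sigma] at hx ⊢
    obtain ⟨hq, hs⟩ := hx
    obtain ⟨hpos, hsum⟩ := mem_parts.mp hq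
    have hsq : s ∈ q := Multiset.mem_toFinset.mp hs
    have hs1 : 1 ≤ s := hpos s hsq
    have hsum' : s + (q.erase s).sum = n + 1 := by
      rw [← Multiset.sum_cons, Multiset.cons_erase hsq, hsum]
    constructor
    · exact Finset.mem_range.mpr (by omega)
    · refine mem_parts.mpr ⟨fun t ht => hpos t (Multiset.mem_of_mem_erase ht), by omega⟩
  · rintro ⟨j, p⟩ hy
    simp only [Finset.mem_sigma] at hy ⊢
    obtain ⟨hj, hp⟩ := hy
    obtain ⟨hpos, hsum⟩ := mem_parts.mp hp
    have hjn : j ≤ n := Finset.mem_range_succ_iff.mp hj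
    constructor
    · refine mem_parts.mpr ⟨?_, ?_⟩
      · intro t ht
        rcases Multiset.mem_cons.mp ht with h | h
        · omega
        · exact hpos t h
      · rw [Multiset.sum_cons, hsum]; omega
    · exact Multiset.mem_toFinset.mpr (Multiset.mem_cons_self _ _)
  · rintro ⟨q, s⟩ hx
    simp only [Finset.mem_sigma] at hx
    obtain ⟨hq, hs⟩ := hx
    obtain ⟨hpos, hsum⟩ := mem_parts.mp hq
    have hsq : s ∈ q := Multiset.mem_toFinset.mp hs
    have hs1 : 1 ≤ s := hpos s hsq
    have hsn : s ≤ n + 1 := by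
      have : s + (q.erase s).sum = n + 1 := by
        rw [← Multiset.sum_cons, Multiset.cons_erase hsq, hsum]
      omega
    have hss : n + 1 - (n + 1 - s) = s := by omega
    simp [hss, Multiset.cons_erase hsq]
  · rintro ⟨j, p⟩ hy
    simp only [Finset.mem_sigma] at hy
    have hjn : j ≤ n := Finset.mem_range_succ_iff.mp hy.1
    have hjj : n + 1 - (n + 1 - j) = j := by omega
    simp [hjj, Multiset.erase_cons_head]
  · rintro ⟨q, s⟩ hx
    simp only [Finset.mem_sigma] at hx
    obtain ⟨hq, hs⟩ := hx
    obtain ⟨hpos, hsum⟩ := mem_parts.mp hq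
    have hsq : s ∈ q := Multiset.mem_toFinset.mp hs
    have hs1 : 1 ≤ s := hpos s hsq
    have hsn : s ≤ n + 1 := by
      have : s + (q.erase s).sum = n + 1 := by
        rw [← Multiset.sum_cons, Multiset.cons_erase hsq, hsum]
      omega
    have : n - (n + 1 - s) = s - 1 := by omega
    simp [this]

lemma parts_zero : parts 0 = {(0 : Multiset ℕ)} := by
  ext q
  rw [mem_parts, Finset.mem_singleton]
  constructor
  · rintro ⟨hpos, hsum⟩
    rw [Multiset.eq_zero_iff_forall_notMem]
    intro x hx
    have h1 := hpos x hx
    have h2 : x ≤ q.sum := Multiset.single_le_sum (fun y _ => Nat.zero_le y) x hx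
    omega
  · rintro rfl
    simp

lemma sum_faaC_eq_bell : ∀ n : ℕ, ∑ q ∈ parts n, faaC n q = bell n := by
  intro n
  induction n using Nat.strong_induction_on with
  | _ n ih =>
    match n with
    | 0 =>
      rw [parts_zero, Finset.sum_singleton]
      simp [faaC, bell]
    | n + 1 =>
      rw [sum_faaC_rec, bell_succ]
      refine Finset.sum_congr rfl fun j hj => ?_
      rw [ih j (Finset.mem_range.mp hj)]

section Analysis

lemma iteratedDeriv_add' (n : ℕ) {f g : ℝ → ℝ} (hf : ContDiff ℝ (⊤ : ℕ∞) f)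
    (hg : ContDiff ℝ (⊤ : ℕ∞) g) (x : ℝ) :
    iteratedDeriv n (fun y => f y + g y) x = iteratedDeriv n f x + iteratedDeriv n g x := by
  simp only [← iteratedDerivWithin_univ]
  exact iteratedDerivWithin_add (Set.mem_univ x) uniqueDiffOn_univ
    (hf.of_le (by exact_mod_cast le_top)).contDiffWithinAt
    (hg.of_le (by exact_mod_cast le_top)).contDiffWithinAt

lemma pascal_sum (n : ℕ) (D : ℕ → ℝ) (E : ℝ) :
    ∑ i ∈ range (n+2), ((n+1).choose i : ℝ) * (E * D i)
      = ∑ i ∈ range (n+1), (n.choose i : ℝ) * (E * (D i + D (i+1))) := by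
  have hB : ∑ i ∈ range (n+1), (n.choose (i+1) : ℝ) * (E * D (i+1))
      = ∑ i ∈ range (n+1), (n.choose i : ℝ) * (E * D i) - (E * D 0) := by
    have h1 := Finset.sum_range_succ' (fun i => (n.choose i : ℝ) * (E * D i)) (n+1)
    have h2 := Finset.sum_range_succ (fun i => (n.choose i : ℝ) * (E * D i)) (n+1)
    simp only [Nat.choose_zero_right, Nat.cast_one, one_mul, Nat.choose_succ_self,
      Nat.cast_zero, zero_mul, add_zero] at h1 h2
    rw [← h2, h1]
    ring
  rw [Finset.sum_range_succ' (fun i => ((n+1).choose i : ℝ) * (E * D i)) (n+1)]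
  simp only [Nat.choose_succ_succ, Nat.choose_zero_right, Nat.cast_one, one_mul, Nat.cast_add]
  have : ∑ i ∈ range (n+1), ((n.choose i : ℝ) + (n.choose (i+1) : ℝ)) * (E * D (i+1))
      = ∑ i ∈ range (n+1), (n.choose i : ℝ) * (E * D (i+1))
        + ∑ i ∈ range (n+1), (n.choose (i+1) : ℝ) * (E * D (i+1)) := by
    rw [← Finset.sum_add_distrib]
    exact Finset.sum_congr rfl fun i _ => by ring
  rw [this, hB]
  have h4 : ∑ i ∈ range (n+1), (n.choose i : ℝ) * (E * D (i+1))
      + ∑ i ∈ range (n+1), (n.choose i : ℝ) * (E * D i)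
      = ∑ i ∈ range (n+1), (n.choose i : ℝ) * (E * (D i + D (i+1))) := by
    rw [← Finset.sum_add_distrib]
    exact Finset.sum_congr rfl fun i _ => by ring
  linarith [h4]

lemma iteratedDeriv_exp_mul (n : ℕ) : ∀ (g : ℝ → ℝ), ContDiff ℝ (⊤ : ℕ∞) g → ∀ x : ℝ,
    iteratedDeriv n (fun y => Real.exp y * g y) x
      = ∑ i ∈ range (n+1), (n.choose i : ℝ) * (Real.exp x * iteratedDeriv i g x) := by
  induction n with
  | zero => intro g hg x; simp
  | succ n ih =>
    intro g hg x
    have hg' : ContDiff ℝ (⊤ : ℕ∞) (deriv g) := (contDiff_infty_iff_deriv.mp hg).2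
    have hsum : ContDiff ℝ (⊤ : ℕ∞) (fun y => g y + deriv g y) := hg.add hg'
    have hder : deriv (fun y => Real.exp y * g y) = fun y => Real.exp y * (g y + deriv g y) := by
      funext y
      rw [deriv_fun_mul (Real.differentiable_exp.differentiableAt)
        ((hg.differentiable (by simp)).differentiableAt), Real.deriv_exp]
      ring
    rw [iteratedDeriv_succ', hder, ih _ hsum x]
    have hsplit : ∀ i, iteratedDeriv i (fun y => g y + deriv g y) x
        = iteratedDeriv i g x + iteratedDeriv (i+1) g x := by
      intro i
      rw [iteratedDeriv_add' i hg hg' x, iteratedDeriv_succ']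
    simp only [hsplit]
    exact (pascal_sum n (fun i => iteratedDeriv i g x) (Real.exp x)).symm

lemma contDiff_expexp : ContDiff ℝ (⊤ : ℕ∞) (fun x => Real.exp (Real.exp x)) :=
  Real.contDiff_exp.comp Real.contDiff_exp

lemma deriv_expexp : deriv (fun x => Real.exp (Real.exp x))
    = fun y => Real.exp y * Real.exp (Real.exp y) := by
  funext y
  have h : HasDerivAt (fun x => Real.exp (Real.exp x)) (Real.exp (Real.exp y) * Real.exp y) y :=
    (Real.hasDerivAt_exp (Real.exp y)).comp y (Real.hasDerivAt_exp y)
  rw [h.deriv]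
  ring

lemma iteratedDeriv_expexp_eq_bell : ∀ n : ℕ,
    iteratedDeriv n (fun x => Real.exp (Real.exp x)) 0 = Real.exp 1 * ((bell n : ℚ) : ℝ) := by
  have hrec : ∀ n : ℕ, iteratedDeriv (n+1) (fun x => Real.exp (Real.exp x)) 0
      = ∑ i ∈ range (n+1), (n.choose i : ℝ)
          * iteratedDeriv i (fun x => Real.exp (Real.exp x)) 0 := by
    intro n
    rw [iteratedDeriv_succ', deriv_expexp, iteratedDeriv_exp_mul n _ contDiff_expexp 0]
    simp [Real.exp_zero]
  intro n
  induction n using Nat.strong_induction_on with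
  | _ n ih =>
    match n with
    | 0 => simp [bell, Real.exp_zero]
    | n + 1 =>
      rw [hrec n]
      have hbell : ((bell (n+1) : ℚ) : ℝ)
          = ∑ i ∈ range (n+1), (n.choose i : ℝ) * ((bell i : ℚ) : ℝ) := by
        rw [bell_succ]
        push_cast
        rfl
      rw [hbell, Finset.mul_sum]
      refine Finset.sum_congr rfl fun i hi => ?_
      rw [ih i (Finset.mem_range.mp hi)]
      ring

end Analysis

theorem iteratedDeriv_exp_exp (n : ℕ) :
    iteratedDeriv n (fun x => Real.exp (Real.exp x)) 0 =
      Real.exp 1 * ((∑ p : n.Partition, faaC n p.parts : ℚ) : ℝ) := by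
  rw [iteratedDeriv_expexp_eq_bell n]
  congr 1
  rw [sum_parts (faaC n), sum_faaC_eq_bell n]
end

section
/- Faà di Bruno formula in partition form: if f and g are n-times continuously differentiable on ℝ, then (f ∘ g)^{(n)}(x) = ∑_{j=1}^n f^{(j)}(g(x)) · ∑_{k} C^n_k · ∏_{p=1}^j g^{(k_p)}(x), where the inner sum is over all weakly decreasing j-tuples k = (k₁,…,k_j) of positive integers with k₁ + ⋯ + k_j = n, and C^n_k = (n!/∏_p k_p!)/∏_i N(k,i)!. -/
/-- The multiset of part sizes of an ordered finpartition. -/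
def msize {n : ℕ} (c : OrderedFinpartition n) : Multiset ℕ :=
  Multiset.map c.partSize Finset.univ.val

lemma msize_eq_ofFn {n : ℕ} (c : OrderedFinpartition n) :
    msize c = ↑(List.ofFn c.partSize) := by
  simp [msize, List.ofFn_eq_map, Finset.univ]
  rfl

lemma map_univ_eq_ofFn {l : ℕ} (f : Fin l → ℕ) :
    Multiset.map f Finset.univ.val = ↑(List.ofFn f) := by
  simp [List.ofFn_eq_map, Finset.univ]
  rfl

lemma msize_card {n : ℕ} (c : OrderedFinpartition n) : (msize c).card = c.length := by
  simp [msize]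

lemma msize_sum {n : ℕ} (c : OrderedFinpartition n) : (msize c).sum = n := by
  have := Fintype.card_congr c.equivSigma
  simpa [msize, Finset.sum_eq_multiset_sum] using this

lemma zero_not_mem_msize {n : ℕ} (c : OrderedFinpartition n) : 0 ∉ msize c := by
  simp only [msize, Multiset.mem_map]
  rintro ⟨i, -, h⟩
  exact (c.partSize_pos i).ne h.symm

lemma msize_extendLeft {n : ℕ} (c : OrderedFinpartition n) :
    msize c.extendLeft = 1 ::ₘ msize c := by
  rw [msize_eq_ofFn, msize_eq_ofFn]
  show (↑(List.ofFn (Fin.cons 1 c.partSize)) : Multiset ℕ) = _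
  rw [List.ofFn_succ]
  simp

lemma msize_extendMiddle {n : ℕ} (c : OrderedFinpartition n) (i : Fin c.length) :
    msize (c.extendMiddle i) = (c.partSize i + 1) ::ₘ (msize c).erase (c.partSize i) := by
  show Multiset.map (Function.update c.partSize i (c.partSize i + 1)) Finset.univ.val = _
  have hmem : i ∈ (Finset.univ : Finset (Fin c.length)).val := Finset.mem_univ_val i
  have h1 : (Finset.univ : Finset (Fin c.length)).val
      = i ::ₘ (Finset.univ : Finset (Fin c.length)).val.erase i :=
    (Multiset.cons_erase hmem).symm
  have h2 : (msize c).erase (c.partSize i)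
      = Multiset.map c.partSize ((Finset.univ : Finset (Fin c.length)).val.erase i) := by
    rw [msize]
    conv_lhs => rw [h1]
    rw [Multiset.map_cons, Multiset.erase_cons_head]
  rw [h2]
  conv_lhs => rw [h1]
  rw [Multiset.map_cons, Function.update_self]
  congr 1
  refine Multiset.map_congr rfl fun j hj => ?_
  have hne : j ≠ i :=
    ((Multiset.Nodup.mem_erase_iff (Finset.univ : Finset (Fin c.length)).nodup).mp hj).1
  simp [Function.update_of_ne hne]

/-- Weight: `∏ k_p! * ∏_i N(k,i)!`. -/
def Wn (k : Multiset ℕ) : ℕ :=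
  (k.map Nat.factorial).prod * ∏ i ∈ k.toFinset, (k.count i).factorial

lemma Wn_pos (k : Multiset ℕ) : 0 < Wn k := by
  apply Nat.mul_pos
  · apply Multiset.prod_pos
    intro a ha
    rcases Multiset.mem_map.mp ha with ⟨b, -, rfl⟩
    exact Nat.factorial_pos b
  · exact Finset.prod_pos fun i _ => Nat.factorial_pos _

lemma Wn_cons (a : ℕ) (k : Multiset ℕ) :
    Wn (a ::ₘ k) = a.factorial * ((k.count a + 1) * Wn k) := by
  unfold Wn
  rw [Multiset.map_cons, Multiset.prod_cons, Multiset.toFinset_cons]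
  have hcount : ∀ i ∈ k.toFinset.erase a, (a ::ₘ k).count i = k.count i := fun i hi =>
    Multiset.count_cons_of_ne (Finset.mem_erase.mp hi).1 _
  have h1 : ∏ i ∈ insert a k.toFinset, ((a ::ₘ k).count i).factorial
      = (k.count a + 1).factorial * ∏ i ∈ k.toFinset.erase a, (k.count i).factorial := by
    rw [← Finset.mul_prod_erase (insert a k.toFinset)
        (fun i => ((a ::ₘ k).count i).factorial) (Finset.mem_insert_self a _),
      Finset.erase_insert_eq_erase, Multiset.count_cons_self]
    exact congrArg _ (Finset.prod_congr rfl fun i hi => by rw [hcount i hi])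
  rw [h1]
  by_cases ha : a ∈ k.toFinset
  · have h2 : ∏ i ∈ k.toFinset, (k.count i).factorial
        = (k.count a).factorial * ∏ i ∈ k.toFinset.erase a, (k.count i).factorial :=
      (Finset.mul_prod_erase _ _ ha).symm
    rw [h2, Nat.factorial_succ]
    ring
  · have h0 : k.count a = 0 := by
      simpa using fun h => ha (Multiset.mem_toFinset.mpr h)
    rw [h0, Finset.erase_eq_of_notMem ha]
    simp [Nat.factorial]
    ring

open Classical in
/-- Number of ordered finpartitions of `n` with part-size multiset `k`. -/
noncomputable def Nfib (n : ℕ) (k : Multiset ℕ) : ℕ :=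
  (Finset.univ.filter fun c : OrderedFinpartition n => msize c = k).card

lemma Nfib_eq_zero {n : ℕ} {k : Multiset ℕ} (h : ¬ (k.sum = n ∧ 0 ∉ k)) : Nfib n k = 0 := by
  classical
  rw [Nfib, Finset.card_eq_zero, Finset.filter_eq_empty_iff]
  intro c _
  intro heq
  exact h (heq ▸ ⟨msize_sum c, zero_not_mem_msize c⟩)

lemma card_filter_option {α : Type*} [Fintype α] (Q : Option α → Prop) [DecidablePred Q] :
    (Finset.univ.filter Q).card
      = (if Q none then 1 else 0) + (Finset.univ.filter fun a => Q (some a)).card := by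
  rw [Finset.card_filter, Finset.card_filter, univ_option, Finset.sum_insertNone]

lemma card_filter_sigma {α : Type*} [Fintype α] {β : α → Type*} [∀ a, Fintype (β a)]
    (P : (Σ a, β a) → Prop) [DecidablePred P] :
    (Finset.univ.filter P).card = ∑ a : α, (Finset.univ.filter fun b : β a => P ⟨a, b⟩).card := by
  classical
  have h : (Finset.univ : Finset (Σ a, β a)).filter P
      = Finset.univ.sigma (fun a => Finset.univ.filter fun b : β a => P ⟨a, b⟩) := by
    ext ⟨a, b⟩
    simp
  rw [h, Finset.card_sigma]

lemma cond_equiv {K k' : Multiset ℕ} {m : ℕ} (hm : m ∈ K) :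
    ((m + 1) ::ₘ K.erase m = k') ↔ (m + 1 ∈ k' ∧ K = m ::ₘ k'.erase (m + 1)) := by
  constructor
  · rintro rfl
    exact ⟨Multiset.mem_cons_self _ _, by rw [Multiset.erase_cons_head, Multiset.cons_erase hm]⟩
  · rintro ⟨h1, rfl⟩
    rw [Multiset.erase_cons_head, Multiset.cons_erase h1]

lemma Nfib_succ (n : ℕ) (k' : Multiset ℕ) :
    Nfib (n + 1) k' = (if 1 ∈ k' then Nfib n (k'.erase 1) else 0)
      + ∑ m ∈ Finset.range (n + 1),
          if m + 1 ∈ k' then (m ::ₘ k'.erase (m + 1)).count m * Nfib n (m ::ₘ k'.erase (m + 1))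
          else 0 := by
  classical
  have h1 : Nfib (n + 1) k'
      = (Finset.univ.filter fun x : Σ c : OrderedFinpartition n, Option (Fin c.length) =>
          msize (x.1.extend x.2) = k').card := by
    rw [Nfib, ← Fintype.card_subtype, ← Fintype.card_subtype]
    refine Fintype.card_congr ((OrderedFinpartition.extendEquiv n).symm.subtypeEquiv fun c' => ?_)
    rw [show ((OrderedFinpartition.extendEquiv n).symm c').1.extend
        ((OrderedFinpartition.extendEquiv n).symm c').2
        = (OrderedFinpartition.extendEquiv n) ((OrderedFinpartition.extendEquiv n).symm c')
        from rfl, Equiv.apply_symm_apply]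
  rw [h1, card_filter_sigma]
  have h2 : ∀ c : OrderedFinpartition n,
      (Finset.univ.filter fun o : Option (Fin c.length) => msize (c.extend o) = k').card
      = (if 1 ∈ k' ∧ msize c = k'.erase 1 then 1 else 0)
        + ∑ m ∈ Finset.range (n + 1),
            (if m + 1 ∈ k' ∧ msize c = m ::ₘ k'.erase (m + 1) then 1 else 0)
              * (msize c).count m := by
    intro c
    rw [card_filter_option]
    congr 1
    · -- none case
      simp only [OrderedFinpartition.extend, msize_extendLeft]
      congr 1
      simp only [eq_iff_iff]
      constructor
      · rintro rfl
        exact ⟨Multiset.mem_cons_self _ _, (Multiset.erase_cons_head _ _).symm⟩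
      · rintro ⟨hmem, h⟩
        rw [h, Multiset.cons_erase hmem]
    · -- some case
      have hcond : ∀ i : Fin c.length, (msize (c.extendMiddle i) = k')
          ↔ ((c.partSize i + 1) ::ₘ (msize c).erase (c.partSize i) = k') := by
        intro i; rw [msize_extendMiddle]
      calc (Finset.univ.filter fun i : Fin c.length => msize (c.extendMiddle i) = k').card
          = ∑ i : Fin c.length,
              if (c.partSize i + 1) ::ₘ (msize c).erase (c.partSize i) = k' then 1 else 0 := by
            rw [Finset.card_filter]
            exact Finset.sum_congr rfl fun i _ => if_congr (hcond i) rfl rfl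
        _ = ∑ m ∈ Finset.range (n + 1), ∑ i ∈ Finset.univ.filter fun i => c.partSize i = m,
              (if (m + 1) ::ₘ (msize c).erase m = k' then 1 else 0) := by
            rw [← Finset.sum_fiberwise_of_maps_to
              (g := c.partSize) (t := Finset.range (n + 1))
              (fun i _ => Finset.mem_range.mpr (Nat.lt_succ_of_le (c.partSize_le i)))]
            refine Finset.sum_congr rfl fun m _ => Finset.sum_congr rfl fun i hi => ?_
            rw [(Finset.mem_filter.mp hi).2]
        _ = ∑ m ∈ Finset.range (n + 1),
              (if (m + 1) ::ₘ (msize c).erase m = k' then 1 else 0) * (msize c).count m := by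
            refine Finset.sum_congr rfl fun m _ => ?_
            rw [Finset.sum_const, smul_eq_mul, mul_comm]
            congr 1
            rw [msize, Multiset.count_map, Finset.card_def, Finset.filter_val]
            exact congrArg Multiset.card (Multiset.filter_congr fun x _ => eq_comm)
        _ = ∑ m ∈ Finset.range (n + 1),
              (if m + 1 ∈ k' ∧ msize c = m ::ₘ k'.erase (m + 1) then 1 else 0)
                * (msize c).count m := by
            refine Finset.sum_congr rfl fun m _ => ?_
            by_cases hm : m ∈ msize c
            · exact congrArg (· * Multiset.count m (msize c)) (if_congr (cond_equiv hm) rfl rfl)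
            · have : (msize c).count m = 0 := Multiset.count_eq_zero.mpr hm
              rw [this, mul_zero, mul_zero]
  rw [Finset.sum_congr rfl fun c _ => h2 c, Finset.sum_add_distrib]
  congr 1
  · by_cases h1k : 1 ∈ k'
    · rw [if_pos h1k, Nfib, Finset.card_filter]
      exact Finset.sum_congr rfl fun c _ => by simp [h1k]
    · rw [if_neg h1k]
      exact Finset.sum_eq_zero fun c _ => by simp [h1k]
  · rw [Finset.sum_comm]
    refine Finset.sum_congr rfl fun m _ => ?_
    by_cases hmk : m + 1 ∈ k'
    · rw [if_pos hmk]
      calc ∑ c : OrderedFinpartition n,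
            (if m + 1 ∈ k' ∧ msize c = m ::ₘ k'.erase (m + 1) then 1 else 0) * (msize c).count m
          = ∑ c : OrderedFinpartition n,
              (if msize c = m ::ₘ k'.erase (m + 1) then (m ::ₘ k'.erase (m + 1)).count m
               else 0) := by
            refine Finset.sum_congr rfl fun c _ => ?_
            by_cases h : msize c = m ::ₘ k'.erase (m + 1)
            · rw [if_pos ⟨hmk, h⟩, if_pos h, one_mul, h]
            · rw [if_neg (fun hc => h hc.2), if_neg h, zero_mul]
        _ = (m ::ₘ k'.erase (m + 1)).count m * Nfib n (m ::ₘ k'.erase (m + 1)) := by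
            rw [← Finset.sum_filter, Finset.sum_const, Nfib, smul_eq_mul, mul_comm]
    · rw [if_neg hmk]
      exact Finset.sum_eq_zero fun c _ => by simp [hmk]

lemma sum_count_mul (k : Multiset ℕ) (N : ℕ) (hN : ∀ x ∈ k, x < N) :
    ∑ v ∈ Finset.range N, v * k.count v = k.sum := by
  classical
  have h1 : k.sum = ∑ v ∈ k.toFinset, k.count v * v := by
    simpa using (Finset.sum_multiset_map_count k id)
  rw [h1]
  rw [Finset.sum_subset (fun v hv => Finset.mem_range.mpr (hN v (Multiset.mem_toFinset.mp hv)))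
    (fun v _ hv => by
      rw [Multiset.count_eq_zero.mpr (fun h => hv (Multiset.mem_toFinset.mpr h)), zero_mul])]
  exact Finset.sum_congr rfl fun v _ => mul_comm _ _

theorem Nfib_mul_Wn : ∀ (n : ℕ) (k : Multiset ℕ), k.sum = n → 0 ∉ k →
    Nfib n k * Wn k = n.factorial := by
  intro n
  induction n with
  | zero =>
    intro k hsum h0
    have hk : k = 0 := Multiset.eq_zero_of_forall_notMem fun x hx => by
      have hx0 : x = 0 := by
        have := Multiset.sum_eq_zero_iff.mp hsum
        exact this x hx
      exact h0 (hx0 ▸ hx)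
    subst hk
    have h1 : Nfib 0 0 = 1 := by
      classical
      rw [Nfib, Finset.filter_true_of_mem fun c _ => ?_, Finset.card_univ, Fintype.card_unique]
      have hlen : c.length = 0 := Nat.le_zero.mp c.length_le
      rw [← Multiset.card_eq_zero, msize_card, hlen]
    rw [h1]
    simp [Wn]
  | succ n IH =>
    intro k' hsum h0
    rw [Nfib_succ, add_mul, Finset.sum_mul]
    have hT1 : (if 1 ∈ k' then Nfib n (k'.erase 1) else 0) * Wn k'
        = k'.count 1 * n.factorial := by
      by_cases h1 : 1 ∈ k'
      · have hk : k' = 1 ::ₘ k'.erase 1 := (Multiset.cons_erase h1).symm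
        have hsum' : (k'.erase 1).sum = n := by
          have : (1 ::ₘ k'.erase 1).sum = n + 1 := by rw [← hk]; exact hsum
          rw [Multiset.sum_cons] at this; omega
        have h0' : (0 : ℕ) ∉ k'.erase 1 := fun h => h0 (Multiset.mem_of_mem_erase h)
        have hcnt : (k'.erase 1).count 1 + 1 = k'.count 1 := by
          rw [Multiset.count_erase_self]
          have : 0 < k'.count 1 := Multiset.count_pos.mpr h1
          omega
        have hW : Wn k' = Nat.factorial 1 * (((k'.erase 1).count 1 + 1) * Wn (k'.erase 1)) := by
          conv_lhs => rw [hk]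
          exact Wn_cons 1 _
        rw [if_pos h1, hW, Nat.factorial_one, one_mul, ← hcnt]
        calc Nfib n (k'.erase 1) * (((k'.erase 1).count 1 + 1) * Wn (k'.erase 1))
            = ((k'.erase 1).count 1 + 1) * (Nfib n (k'.erase 1) * Wn (k'.erase 1)) := by ring
          _ = ((k'.erase 1).count 1 + 1) * n.factorial := by rw [IH _ hsum' h0']
      · rw [if_neg h1, zero_mul, Multiset.count_eq_zero.mpr h1, zero_mul]
    have hT2 : ∀ m ∈ Finset.range (n + 1),
        (if m + 1 ∈ k' then (m ::ₘ k'.erase (m + 1)).count m * Nfib n (m ::ₘ k'.erase (m + 1))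
         else 0) * Wn k'
        = if m = 0 then 0 else (m + 1) * k'.count (m + 1) * n.factorial := by
      intro m _
      by_cases hmk : m + 1 ∈ k'
      · rw [if_pos hmk]
        rcases Nat.eq_zero_or_pos m with rfl | hm0
        · rw [if_pos rfl]
          have : Nfib n (0 ::ₘ k'.erase 1) = 0 :=
            Nfib_eq_zero fun hc => hc.2 (Multiset.mem_cons_self 0 _)
          rw [this, mul_zero, zero_mul]
        · rw [if_neg hm0.ne']
          have hk : k' = (m + 1) ::ₘ k'.erase (m + 1) := (Multiset.cons_erase hmk).symm
          set R := k'.erase (m + 1) with hR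
          have hsumR : R.sum = n - m := by
            have : ((m + 1) ::ₘ R).sum = n + 1 := by rw [← hk]; exact hsum
            rw [Multiset.sum_cons] at this
            omega
          have hmn : m ≤ n := by
            have : ((m + 1) ::ₘ R).sum = n + 1 := by rw [← hk]; exact hsum
            rw [Multiset.sum_cons] at this
            omega
          have hsumK : (m ::ₘ R).sum = n := by rw [Multiset.sum_cons, hsumR]; omega
          have h0R : (0 : ℕ) ∉ R := fun h => h0 (Multiset.mem_of_mem_erase h)
          have h0K : (0 : ℕ) ∉ m ::ₘ R := by
            rw [Multiset.mem_cons]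
            rintro (h | h)
            · exact hm0.ne' h.symm
            · exact h0R h
          have hcnt : k'.count (m + 1) = R.count (m + 1) + 1 := by
            conv_lhs => rw [hk]
            rw [Multiset.count_cons_self]
          calc (m ::ₘ R).count m * Nfib n (m ::ₘ R) * Wn k'
              = (R.count m + 1) * Nfib n (m ::ₘ R)
                  * ((m + 1).factorial * ((R.count (m + 1) + 1) * Wn R)) := by
                have hW : Wn k' = (m + 1).factorial * ((R.count (m + 1) + 1) * Wn R) := by
                  conv_lhs => rw [hk]
                  exact Wn_cons _ _
                rw [Multiset.count_cons_self, hW]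
            _ = (Nfib n (m ::ₘ R) * (m.factorial * ((R.count m + 1) * Wn R)))
                  * ((m + 1) * (R.count (m + 1) + 1)) := by
                rw [Nat.factorial_succ]
                ring
            _ = n.factorial * ((m + 1) * (R.count (m + 1) + 1)) := by
                rw [← Wn_cons, IH _ hsumK h0K]
            _ = (m + 1) * k'.count (m + 1) * n.factorial := by rw [hcnt]; ring
      · rw [if_neg hmk, zero_mul, Multiset.count_eq_zero.mpr hmk]
        simp
    rw [Finset.sum_congr rfl hT2, hT1]
    have hlt : ∀ x ∈ k', x < n + 2 := fun x hx => by
      have : x ≤ k'.sum := Multiset.single_le_sum (fun _ _ => Nat.zero_le _) x hx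
      omega
    have hS := sum_count_mul k' (n + 2) hlt
    rw [hsum] at hS
    calc k'.count 1 * n.factorial
          + ∑ m ∈ Finset.range (n + 1),
              (if m = 0 then 0 else (m + 1) * k'.count (m + 1) * n.factorial)
        = (k'.count 1 + ∑ m ∈ Finset.range (n + 1),
            (if m = 0 then 0 else (m + 1) * k'.count (m + 1))) * n.factorial := by
          rw [add_mul, Finset.sum_mul]
          congr 1
          refine Finset.sum_congr rfl fun m _ => ?_
          by_cases h : m = 0 <;> simp [h]
      _ = (∑ v ∈ Finset.range (n + 2), v * k'.count v) * n.factorial := by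
          congr 1
          rw [Finset.sum_range_succ' (fun v => v * k'.count v) (n + 1),
            Finset.sum_range_succ' (fun i => (i + 1) * k'.count (i + 1)) n,
            Finset.sum_range_succ'
              (fun m => if m = 0 then 0 else (m + 1) * k'.count (m + 1)) n]
          simp only [Nat.succ_ne_zero, mul_zero, zero_mul, add_zero, one_mul, reduceIte,
            if_false]
          ring
      _ = (n + 1).factorial := by rw [hS, Nat.factorial_succ]

lemma faaC_eq_Nfib {n : ℕ} {k : Multiset ℕ} (hsum : k.sum = n) (h0 : 0 ∉ k) :
    faaC n k = (Nfib n k : ℚ) := by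
  have hW : ((Wn k : ℚ)) ≠ 0 := by exact_mod_cast (Wn_pos k).ne'
  have hcast : ((k.map Nat.factorial).prod : ℚ)
      * (k.toFinset.prod fun i => ((k.count i).factorial : ℚ)) = (Wn k : ℚ) := by
    rw [Wn, Nat.cast_mul, Nat.cast_prod]
  rw [faaC, hcast, eq_comm, eq_div_iff hW]
  exact_mod_cast Nfib_mul_Wn n k hsum h0

lemma multiset_card_le_sum (k : Multiset ℕ) (h : 0 ∉ k) : k.card ≤ k.sum := by
  induction k using Multiset.induction with
  | empty => simp
  | cons a s ih =>
    simp only [Multiset.card_cons, Multiset.sum_cons, Multiset.mem_cons, not_or] at *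
    have h1 := ih h.2
    have h2 : a ≠ 0 := fun h' => h.1 h'.symm
    omega

/-- The underlying partition of an ordered finpartition. -/
noncomputable def toPart {n : ℕ} (c : OrderedFinpartition n) : n.Partition :=
  ⟨msize c, fun hi => Nat.pos_of_ne_zero (fun h => zero_not_mem_msize c (h ▸ hi)), msize_sum c⟩

lemma toPart_parts {n : ℕ} (c : OrderedFinpartition n) : (toPart c).parts = msize c := rfl

lemma toPart_eq_iff {n : ℕ} (c : OrderedFinpartition n) (p : n.Partition) :
    toPart c = p ↔ msize c = p.parts := by
  constructor
  · rintro rfl; rfl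
  · intro h; ext1; rw [toPart_parts, h]

/-- Faà di Bruno's formula in partition form: for `n`-times continuously differentiable
`f, g : ℝ → ℝ`,
`(f ∘ g)^{(n)}(x) = ∑_{j=1}^n f^{(j)}(g x) ∑_{k ⊢ n, length j} C^n_k ∏_p g^{(k_p)}(x)`. -/
theorem faa_di_bruno (n : ℕ) (hn : 1 ≤ n) (f g : ℝ → ℝ)
    (hf : ContDiff ℝ n f) (hg : ContDiff ℝ n g) (x : ℝ) :
    iteratedDeriv n (f ∘ g) x =
      ∑ j ∈ Finset.Icc 1 n, iteratedDeriv j f (g x) *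
        ∑ p ∈ Finset.univ.filter fun p : n.Partition => p.parts.card = j,
          ((faaC n p.parts : ℚ) : ℝ) * (p.parts.map fun m => iteratedDeriv m g x).prod := by
  classical
  -- Step A: mathlib's Faa di Bruno in terms of ordered finpartitions
  have hstepA : iteratedDeriv n (f ∘ g) x = ∑ c : OrderedFinpartition n,
      iteratedDeriv c.length f (g x) * ∏ i, iteratedDeriv (c.partSize i) g x := by
    have Hf := (hf.contDiffOn (s := Set.univ)).ftaylorSeriesWithin uniqueDiffOn_univ
    have Hg := (hg.contDiffOn (s := Set.univ)).ftaylorSeriesWithin uniqueDiffOn_univ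
    have H := Hf.comp Hg (Set.mapsTo_univ _ _)
    have E := H.eq_iteratedFDerivWithin_of_uniqueDiffOn le_rfl uniqueDiffOn_univ (Set.mem_univ x)
    rw [iteratedFDerivWithin_univ] at E
    have E1 : iteratedDeriv n (f ∘ g) x = iteratedFDeriv ℝ n (f ∘ g) x (fun _ => 1) := by
      rw [iteratedDeriv_eq_iteratedFDeriv]
    rw [E1, ← E]
    simp only [FormalMultilinearSeries.taylorComp, ContinuousMultilinearMap.sum_apply]
    congr 1
    ext c
    rw [FormalMultilinearSeries.compAlongOrderedFinpartition_apply]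
    have hv : c.applyOrderedFinpartition
        (fun m => ftaylorSeriesWithin ℝ g Set.univ x (c.partSize m)) (fun _ => (1:ℝ))
        = fun m => (iteratedDeriv (c.partSize m) g x) • (1:ℝ) := by
      ext m
      rw [OrderedFinpartition.applyOrderedFinpartition_apply]
      simp only [ftaylorSeriesWithin, iteratedFDerivWithin_univ, smul_eq_mul, mul_one,
        iteratedDeriv_eq_iteratedFDeriv]
      rfl
    rw [hv, ContinuousMultilinearMap.map_smul_univ]
    simp [ftaylorSeriesWithin, iteratedFDerivWithin_univ, iteratedDeriv_eq_iteratedFDeriv,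
      mul_comm]
  -- the common regrouped form
  have hterm : ∀ c : OrderedFinpartition n,
      iteratedDeriv c.length f (g x) * ∏ i, iteratedDeriv (c.partSize i) g x
      = iteratedDeriv (msize c).card f (g x)
        * ((msize c).map fun m => iteratedDeriv m g x).prod := by
    intro c
    rw [msize_card]
    congr 1
    rw [msize, Multiset.map_map]
    rfl
  have hgroup : iteratedDeriv n (f ∘ g) x = ∑ p : n.Partition, (Nfib n p.parts : ℝ) *
      (iteratedDeriv p.parts.card f (g x)
        * ((p.parts.map fun m => iteratedDeriv m g x)).prod) := by
    rw [hstepA,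
      ← Finset.sum_fiberwise_of_maps_to (g := toPart) (t := Finset.univ)
        (fun c _ => Finset.mem_univ _)]
    refine Finset.sum_congr rfl fun p _ => ?_
    have hfilter : Finset.univ.filter (fun c : OrderedFinpartition n => toPart c = p)
        = Finset.univ.filter (fun c : OrderedFinpartition n => msize c = p.parts) :=
      Finset.filter_congr fun c _ => by rw [toPart_eq_iff]
    calc ∑ c ∈ Finset.univ.filter (fun c : OrderedFinpartition n => toPart c = p),
          (iteratedDeriv c.length f (g x) * ∏ i, iteratedDeriv (c.partSize i) g x)
        = ∑ _c ∈ Finset.univ.filter (fun c : OrderedFinpartition n => toPart c = p),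
            (iteratedDeriv p.parts.card f (g x)
              * ((p.parts.map fun m => iteratedDeriv m g x)).prod) := by
          refine Finset.sum_congr rfl fun c hc => ?_
          have hm : msize c = p.parts := (toPart_eq_iff c p).mp (Finset.mem_filter.mp hc).2
          rw [hterm c, hm]
      _ = (Nfib n p.parts : ℝ) * (iteratedDeriv p.parts.card f (g x)
            * ((p.parts.map fun m => iteratedDeriv m g x)).prod) := by
          rw [Finset.sum_const, hfilter, nsmul_eq_mul, Nfib]
  rw [hgroup]
  -- regroup the right-hand side
  have hmaps : ∀ p : n.Partition, p ∈ (Finset.univ : Finset n.Partition)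
      → p.parts.card ∈ Finset.Icc 1 n := by
    intro p _
    have h0 : (0 : ℕ) ∉ p.parts := fun h => lt_irrefl 0 (p.parts_pos h)
    have hle : p.parts.card ≤ n := by
      have := multiset_card_le_sum p.parts h0
      rw [p.parts_sum] at this
      exact this
    have hne : p.parts ≠ 0 := fun h => by
      have := p.parts_sum
      rw [h] at this
      simp at this
      omega
    exact Finset.mem_Icc.mpr ⟨Multiset.card_pos.mpr hne, hle⟩
  rw [← Finset.sum_fiberwise_of_maps_to hmaps
    (fun p : n.Partition => (Nfib n p.parts : ℝ) * (iteratedDeriv p.parts.card f (g x)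
      * ((p.parts.map fun m => iteratedDeriv m g x)).prod))]
  refine Finset.sum_congr rfl fun j hj => ?_
  rw [Finset.mul_sum]
  refine Finset.sum_congr rfl fun p hp => ?_
  have hcard : p.parts.card = j := (Finset.mem_filter.mp hp).2
  have h0 : (0 : ℕ) ∉ p.parts := fun h => lt_irrefl 0 (p.parts_pos h)
  rw [faaC_eq_Nfib p.parts_sum h0, ← hcard]
  push_cast
  ring
end
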